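/- Define R(z) = -∏_{j=0}^{2g+1} √(z - E_j), where √ is the principal branch of the complex square root with branch cut along (-∞, 0), and E_0 < ... < E_{2g+1} are real. Then R is holomorphic on ℂ \ [E_0, E_{2g+1}]. -/

import Mathlib

open Complex
local notation "π" => Real.pi

lemma sqrt_neg_aux1 (w : ℂ) (hre : w.re < 0) (him : 0 ≤ w.im) :
    w ^ ((1:ℂ)/2) = Complex.I * (-w) ^ ((1:ℂ)/2) := by
  have hw : w ≠ 0 := by
    intro h; rw [h] at hre; simp at hre
  have hnw : -w ≠ 0 := neg_ne_zero.mpr hw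
  have harg : w.arg = (-w).arg + π := by
    rcases him.lt_or_eq with h | h
    · rw [Complex.arg_neg_eq_arg_sub_pi_of_im_pos h]; ring
    · have h1 : w.arg = π := Complex.arg_eq_pi_iff.mpr ⟨hre, h.symm⟩
      have h2 : (-w).arg = 0 := by
        rw [Complex.arg_eq_zero_iff]
        constructor
        · simp only [Complex.neg_re]; linarith
        · simp [← h]
      rw [h1, h2, zero_add]
  have hlog : Complex.log w = Complex.log (-w) + ↑π * Complex.I := by
    apply Complex.ext
    · simp [Complex.log_re]
    · simp [Complex.log_im, harg]
  rw [Complex.cpow_def_of_ne_zero hw, Complex.cpow_def_of_ne_zero hnw, hlog, add_mul,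
    Complex.exp_add]
  have h2 : (↑π * Complex.I * (1/2)) = (↑(π/2) : ℂ) * Complex.I := by push_cast; ring
  rw [h2, Complex.exp_mul_I, ← Complex.ofReal_cos, ← Complex.ofReal_sin,
    Real.cos_pi_div_two, Real.sin_pi_div_two]
  simp [mul_comm]

lemma sqrt_neg_aux2 (w : ℂ) (hre : w.re < 0) (him : w.im < 0) :
    w ^ ((1:ℂ)/2) = -Complex.I * (-w) ^ ((1:ℂ)/2) := by
  have hw : w ≠ 0 := by
    intro h; rw [h] at hre; simp at hre
  have hnw : -w ≠ 0 := neg_ne_zero.mpr hw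
  have harg : w.arg = (-w).arg - π := by
    rw [Complex.arg_neg_eq_arg_add_pi_of_im_neg him]; ring
  have hlog : Complex.log w = Complex.log (-w) - ↑π * Complex.I := by
    apply Complex.ext
    · simp [Complex.log_re]
    · simp [Complex.log_im, harg]
  rw [Complex.cpow_def_of_ne_zero hw, Complex.cpow_def_of_ne_zero hnw, hlog, sub_mul,
    Complex.exp_sub]
  have h2 : (↑π * Complex.I * (1/2)) = (↑(π/2) : ℂ) * Complex.I := by push_cast; ring
  rw [h2, Complex.exp_mul_I, ← Complex.ofReal_cos, ← Complex.ofReal_sin,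
    Real.cos_pi_div_two, Real.sin_pi_div_two]
  simp
  field_simp

/-- `R(z) = -∏_{j=0}^{2g+1} √(z - E j)` (principal branch, branch cut
along `(-∞,0)`) is holomorphic on `ℂ \ [E 0, E (2g+1)]`. -/
theorem stmt_3 (g : ℕ) (E : ℕ → ℝ)
    (hE : ∀ i j, i < j → j ≤ 2 * g + 1 → E i < E j)
    (R : ℂ → ℂ)
    (hR : ∀ z, R z = -∏ j ∈ Finset.range (2 * g + 2), (z - (E j : ℂ)) ^ ((1 : ℂ) / 2)) :
    DifferentiableOn ℂ R
      {z : ℂ | z.im ≠ 0 ∨ z.re < E 0 ∨ E (2 * g + 1) < z.re} := by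
  have hle0 : ∀ j, j < 2 * g + 2 → E 0 ≤ E j := by
    intro j hj
    rcases Nat.eq_zero_or_pos j with h | h
    · exact h ▸ le_rfl
    · exact (hE 0 j h (by omega)).le
  have hleTop : ∀ j, j < 2 * g + 2 → E j ≤ E (2 * g + 1) := by
    intro j hj
    rcases eq_or_lt_of_le (show j ≤ 2 * g + 1 by omega) with h | h
    · exact h ▸ le_rfl
    · exact (hE j (2 * g + 1) h le_rfl).le
  intro z hz
  apply DifferentiableAt.differentiableWithinAt
  rcases hz with him | hleft | hright
  · -- im z ≠ 0
    have : ∀ j ∈ Finset.range (2 * g + 2),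
        DifferentiableAt ℂ (fun w : ℂ => (w - (E j : ℂ)) ^ ((1 : ℂ)/2)) z := by
      intro j hj
      apply DifferentiableAt.cpow (differentiableAt_id.sub_const _) (differentiableAt_const _)
      exact Or.inr (by simpa using him)
    have hd := (DifferentiableAt.fun_finsetProd this).neg
    exact hd.congr_of_eventuallyEq (Filter.Eventually.of_forall fun w => hR w)
  · -- z.re < E 0 : the delicate case
    set G : ℂ → ℂ := fun w =>
      -((-1 : ℂ) ^ (g + 1) * ∏ j ∈ Finset.range (2 * g + 2), ((E j : ℂ) - w) ^ ((1 : ℂ)/2))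
      with hG
    have key : ∀ w : ℂ, w.re < E 0 → R w = G w := by
      intro w hw
      obtain ⟨ε, hε2, hεw⟩ : ∃ ε : ℂ, ε ^ 2 = -1 ∧ ∀ j ∈ Finset.range (2 * g + 2),
          (w - (E j : ℂ)) ^ ((1 : ℂ)/2) = ε * (((E j : ℂ) - w) ^ ((1 : ℂ)/2)) := by
        have hre : ∀ j ∈ Finset.range (2 * g + 2), (w - (E j : ℂ)).re < 0 := by
          intro j hj
          simp only [Complex.sub_re, Complex.ofReal_re, id_eq]
          have := hle0 j (Finset.mem_range.mp hj)
          linarith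
        rcases le_or_gt 0 w.im with h | h
        · refine ⟨Complex.I, Complex.I_sq, fun j hj => ?_⟩
          have := sqrt_neg_aux1 (w - (E j : ℂ)) (hre j hj) (by simpa using h)
          simpa [neg_sub] using this
        · refine ⟨-Complex.I, by simp [Complex.I_sq], fun j hj => ?_⟩
          have := sqrt_neg_aux2 (w - (E j : ℂ)) (hre j hj) (by simpa using h)
          simpa [neg_sub] using this
      rw [hR, hG, Finset.prod_congr rfl hεw, Finset.prod_mul_distrib, Finset.prod_const,
        Finset.card_range]
      have : ε ^ (2 * g + 2) = (-1 : ℂ) ^ (g + 1) := by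
        rw [show 2 * g + 2 = 2 * (g + 1) by ring, pow_mul, hε2]
      rw [this]
    have hGd : DifferentiableAt ℂ G z := by
      apply DifferentiableAt.neg
      apply DifferentiableAt.const_mul
      apply DifferentiableAt.fun_finsetProd
      intro j hj
      apply DifferentiableAt.cpow ((differentiableAt_const _).sub differentiableAt_id)
        (differentiableAt_const _)
      refine Or.inl ?_
      simp only [Pi.sub_apply, Complex.sub_re, Complex.ofReal_re, id_eq]
      have := hle0 j (Finset.mem_range.mp hj)
      linarith
    have hmem : {w : ℂ | w.re < E 0} ∈ nhds z :=
      (isOpen_lt Complex.continuous_re continuous_const).mem_nhds hleft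
    have heq : R =ᶠ[nhds z] G := Filter.eventuallyEq_of_mem hmem key
    exact hGd.congr_of_eventuallyEq heq
  · -- E (2g+1) < z.re
    have : ∀ j ∈ Finset.range (2 * g + 2),
        DifferentiableAt ℂ (fun w : ℂ => (w - (E j : ℂ)) ^ ((1 : ℂ)/2)) z := by
      intro j hj
      apply DifferentiableAt.cpow (differentiableAt_id.sub_const _) (differentiableAt_const _)
      refine Or.inl ?_
      simp only [Complex.sub_re, Complex.ofReal_re, id_eq]
      have := hleTop j (Finset.mem_range.mp hj)
      linarith
    have hd := (DifferentiableAt.fun_finsetProd this).neg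
    exact hd.congr_of_eventuallyEq (Filter.Eventually.of_forall fun w => hR w)
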